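/- arXiv:0809.3476 — 4 statements merged into one kernel-verified Lean document; each statement's English description precedes it below -/
import Mathlib

section
/- Every factor in a minimal factorization of the n-cycle (1 2 … n) is an increasing cycle; that is, if σ = (s_1 s_2 … s_k) is a cycle appearing as a factor in a factorization σ_m ⋯ σ_1 = (1 2 … n) with ∑_{i=1}^m (|σ_i| − 1) = n − 1, then s_1 < s_2 < … < s_k (where s_1 is the smallest element of the cycle). -/
open Equiv Equiv.Perm Finset
open Fin.NatCast

namespace MinFac

variable {n : ℕ}

/-- The orbit of `x` under `g` as a finset. -/
def orbF (g : Perm (Fin n)) (x : Fin n) : Finset (Fin n) :=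
  Finset.univ.filter (g.SameCycle x)

/-- The finset of orbits of `g`. -/
def orbs (g : Perm (Fin n)) : Finset (Finset (Fin n)) :=
  Finset.univ.image (orbF g)

lemma mem_orbF {g : Perm (Fin n)} {x y : Fin n} : y ∈ orbF g x ↔ g.SameCycle x y := by
  simp [orbF]

lemma self_mem_orbF (g : Perm (Fin n)) (x : Fin n) : x ∈ orbF g x :=
  mem_orbF.2 (Equiv.Perm.SameCycle.refl g x)

lemma orbF_eq_iff {g : Perm (Fin n)} {x y : Fin n} :
    orbF g x = orbF g y ↔ g.SameCycle x y := by
  constructor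
  · intro h
    have := self_mem_orbF g y
    rw [← h, mem_orbF] at this
    exact this
  · intro h
    ext z
    simp only [mem_orbF]
    exact ⟨fun hz => (h.symm).trans hz, fun hz => h.trans hz⟩

lemma card_orbs_one : (orbs (1 : Perm (Fin n))).card = n := by
  have h : orbF (1 : Perm (Fin n)) = fun x => ({x} : Finset (Fin n)) := by
    funext x; ext z; simp [mem_orbF, Equiv.Perm.sameCycle_one, eq_comm]
  rw [orbs, h, Finset.card_image_of_injective _ (fun a b hab => by
    simpa using hab)]
  simp

lemma pow_eq_of_avoid (π ψ : Perm (Fin n)) (y : Fin n)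
    (h : ∀ z, (π⁻¹ * ψ).SameCycle y z → z ∉ π.support) :
    ∀ i : ℕ, ((π⁻¹ * ψ) ^ i) y = (ψ ^ i) y := by
  set ρ := π⁻¹ * ψ with hρ
  intro i
  induction i with
  | zero => simp
  | succ i ih =>
    have hmem : ∀ j : ℕ, (ρ ^ j) y ∉ π.support := fun j =>
      h _ ⟨(j : ℤ), by rw [zpow_natCast]⟩
    have h1 : (ρ ^ i) y ∉ π.support := hmem i
    have h2 : (ρ ^ (i + 1)) y ∉ π.support := hmem (i + 1)
    have hstep : (ρ ^ (i + 1)) y = π⁻¹ (ψ ((ρ ^ i) y)) := by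
      rw [pow_succ', Equiv.Perm.mul_apply, hρ, Equiv.Perm.mul_apply]
    have hψ : ψ ((ρ ^ i) y) ∉ π.support := by
      intro hc
      apply h2
      rw [hstep]
      rw [← Equiv.Perm.support_inv π] at hc ⊢
      exact Equiv.Perm.apply_mem_support.mpr hc
    have : π⁻¹ (ψ ((ρ ^ i) y)) = ψ ((ρ ^ i) y) := by
      rw [← Equiv.Perm.support_inv π] at hψ
      exact Equiv.Perm.notMem_support.mp hψ
    rw [hstep, this, ih, ← Equiv.Perm.mul_apply, ← pow_succ']

lemma orbF_eq_of_avoid (π ψ : Perm (Fin n)) (y : Fin n)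
    (h : ∀ z, (π⁻¹ * ψ).SameCycle y z → z ∉ π.support) :
    orbF (π⁻¹ * ψ) y = orbF ψ y := by
  have key := pow_eq_of_avoid π ψ y h
  ext z
  simp only [mem_orbF]
  constructor
  · intro hz
    obtain ⟨i, _, hi⟩ := hz.exists_pow_eq'
    exact ⟨(i : ℤ), by rw [zpow_natCast, ← key i, hi]⟩
  · intro hz
    obtain ⟨i, _, hi⟩ := hz.exists_pow_eq'
    exact ⟨(i : ℤ), by rw [zpow_natCast, key i, hi]⟩

lemma step (π ψ : Perm (Fin n)) (hS : π.support.Nonempty) :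
    (orbs (π⁻¹ * ψ)).card + 1 ≤ π.support.card + (orbs ψ).card := by
  obtain ⟨s₀, hs₀⟩ := hS
  set ρ := π⁻¹ * ψ with hρ
  classical
  set T1 := (orbs ρ).filter (fun t => ∃ a ∈ π.support, a ∈ t) with hT1
  set T2 := (orbs ρ).filter (fun t => ¬ ∃ a ∈ π.support, a ∈ t) with hT2
  have hsplit : T1.card + T2.card = (orbs ρ).card :=
    Finset.card_filter_add_card_filter_not _
  have hc1 : T1.card ≤ π.support.card := by
    apply Finset.card_le_card_of_surjOn (orbF ρ)
    intro t ht
    simp only [hT1, Finset.coe_filter, Set.mem_setOf_eq] at ht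
    obtain ⟨hto, a, ha, hat⟩ := ht
    obtain ⟨y, _, rfl⟩ := Finset.mem_image.mp hto
    refine ⟨a, ha, ?_⟩
    exact (orbF_eq_iff.mpr (mem_orbF.mp hat)).symm
  have hc2 : T2.card + 1 ≤ (orbs ψ).card := by
    have hsub : T2 ⊆ (orbs ψ).erase (orbF ψ s₀) := by
      intro t ht
      simp only [hT2, Finset.mem_filter] at ht
      obtain ⟨hto, hav⟩ := ht
      push_neg at hav
      obtain ⟨y, _, rfl⟩ := Finset.mem_image.mp hto
      have havoid : ∀ z, ρ.SameCycle y z → z ∉ π.support := by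
        intro z hz hzS
        exact hav z hzS (mem_orbF.mpr hz)
      have heq : orbF ρ y = orbF ψ y := orbF_eq_of_avoid π ψ y havoid
      rw [Finset.mem_erase]
      constructor
      · intro hcon
        have : s₀ ∈ orbF ρ y := by rw [hcon]; exact self_mem_orbF ψ s₀
        exact hav s₀ hs₀ this
      · rw [heq]; exact Finset.mem_image.mpr ⟨y, Finset.mem_univ y, rfl⟩
    have := Finset.card_le_card hsub
    have hm : orbF ψ s₀ ∈ orbs ψ := Finset.mem_image.mpr ⟨s₀, Finset.mem_univ s₀, rfl⟩
    rw [Finset.card_erase_of_mem hm] at this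
    have : (orbs ψ).card ≠ 0 := Finset.card_ne_zero_of_mem hm
    omega
  omega

lemma chain (L : List (Perm (Fin n))) (h : ∀ g ∈ L, g.support.Nonempty) :
    n ≤ (orbs L.prod).card + (L.map fun g => g.support.card - 1).sum := by
  induction L with
  | nil => simp [card_orbs_one]
  | cons π t ih =>
    have hπ : π.support.Nonempty := h π List.mem_cons_self
    have ht : ∀ g ∈ t, g.support.Nonempty := fun g hg => h g (List.mem_cons_of_mem π hg)
    have hstep := step π ((π :: t).prod) hπ
    have hps : π⁻¹ * (π :: t).prod = t.prod := by
      rw [List.prod_cons]; group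
    rw [hps] at hstep
    have hcard : 1 ≤ π.support.card := Finset.card_pos.mpr hπ
    have := ih ht
    simp only [List.map_cons, List.sum_cons]
    omega

lemma conj_prod (σ : Perm (Fin n)) (P : List (Perm (Fin n))) :
    (P.map fun g => σ⁻¹ * g * σ).prod = σ⁻¹ * P.prod * σ := by
  induction P with
  | nil => simp
  | cons g t ih => simp only [List.map_cons, List.prod_cons, ih]; group

lemma finRotate_apply_eq [NeZero n] (x : Fin n) : finRotate n x = x + 1 := by
  cases n with
  | zero => exact x.elim0
  | succ m => exact finRotate_succ_apply x

lemma walk [NeZero n] (σ : Perm (Fin n)) :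
    ∀ (d : ℕ) (x : Fin n), 0 < d →
      (∀ j : ℕ, 0 < j → j < d → x + (j : Fin n) ∉ σ.support) →
      ((σ⁻¹ * finRotate n) ^ d) x = σ⁻¹ (x + (d : Fin n)) := by
  intro d
  induction d with
  | zero => intro x h; exact absurd h (lt_irrefl 0)
  | succ d ih =>
    intro x _ hbet
    rcases Nat.eq_zero_or_pos d with hd0 | hd0
    · subst hd0
      rw [pow_one, Nat.cast_one, Equiv.Perm.mul_apply, finRotate_apply_eq x]
    · have ihx := ih x hd0 (fun j h1 h2 => hbet j h1 (by omega))
      have hnot : x + (d : Fin n) ∉ σ.support := hbet d hd0 (by omega)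
      have hfix : σ⁻¹ (x + (d : Fin n)) = x + (d : Fin n) := by
        rw [← Equiv.Perm.support_inv σ] at hnot
        exact Equiv.Perm.notMem_support.mp hnot
      rw [pow_succ', Equiv.Perm.mul_apply, ihx, hfix, Equiv.Perm.mul_apply,
        finRotate_apply_eq]
      congr 1
      push_cast
      abel

end MinFac

/-- A permutation is an increasing cycle if it is the cyclic permutation
`(s_1 s_2 … s_k)` (mapping each entry to the next, the last to the first)
for a strictly increasing list `s_1 < s_2 < … < s_k`. -/
def IsIncreasingCycle {n : ℕ} (σ : Equiv.Perm (Fin n)) : Prop :=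
  ∃ s : List (Fin n), s.Pairwise (· < ·) ∧ σ = s.formPerm

/-- every factor in a minimal factorization of the `n`-cycle
`(1 2 … n)` (realized as `finRotate n`) is an increasing cycle. -/
theorem factor_of_minimal_factorization_increasing (n : ℕ)
    (l : List (Equiv.Perm (Fin n)))
    (hcyc : ∀ σ ∈ l, σ.IsCycle ∧ 2 ≤ σ.support.card)
    (hprod : l.prod = finRotate n)
    (hmin : (l.map fun σ => σ.support.card - 1).sum = n - 1) :
    ∀ σ ∈ l, IsIncreasingCycle σ := by
  classical
  intro σ hσl
  obtain ⟨hσcyc, hk2⟩ := hcyc σ hσl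
  by_cases hn2 : n < 2
  · exfalso
    have h1 : σ.support.card ≤ Fintype.card (Fin n) := Finset.card_le_univ _
    rw [Fintype.card_fin] at h1
    omega
  push_neg at hn2
  haveI : NeZero n := ⟨by omega⟩
  set S := σ.support with hSdef
  set k := S.card with hkdef
  set ρ := σ⁻¹ * finRotate n with hρdef
  -- Step 1: the number of orbits of ρ is at least k.
  have hNρ : k ≤ (MinFac.orbs ρ).card := by
    obtain ⟨P, Q, rfl⟩ := List.append_of_mem hσl
    set L2 := (P.map fun g => σ⁻¹ * g * σ) ++ Q with hL2def
    have hL2prod : L2.prod = ρ := by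
      have hmap : (P.map fun g => σ⁻¹ * g * σ).prod = σ⁻¹ * P.prod * σ :=
        MinFac.conj_prod σ P
      rw [hL2def, List.prod_append, hmap, hρdef, ← hprod, List.prod_append,
        List.prod_cons]
      group
    have hconjcard : ∀ p : Equiv.Perm (Fin n),
        (σ⁻¹ * p * σ).support.card = p.support.card := by
      intro p
      rw [show σ⁻¹ * p * σ = σ⁻¹ * p * (σ⁻¹)⁻¹ by rw [inv_inv],
        Equiv.Perm.support_conj, Finset.card_map]
    have hL2supp : ∀ g ∈ L2, g.support.Nonempty := by
      intro g hg
      rw [hL2def, List.mem_append] at hg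
      rcases hg with hg | hg
      · obtain ⟨p, hp, rfl⟩ := List.mem_map.mp hg
        have := (hcyc p (by simp [hp])).2
        rw [← hconjcard p] at this
        exact Finset.card_pos.mp (by omega)
      · have := (hcyc g (by simp [hg])).2
        exact Finset.card_pos.mp (by omega)
    have hL2sum : (L2.map fun g => g.support.card - 1).sum + (k - 1) = n - 1 := by
      rw [List.map_append, List.sum_append, List.map_cons, List.sum_cons] at hmin
      have hkS : k = σ.support.card := rfl
      rw [hL2def, List.map_append, List.sum_append, List.map_map]
      have : ((fun g : Equiv.Perm (Fin n) => g.support.card - 1) ∘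
          fun g => σ⁻¹ * g * σ) = fun g => g.support.card - 1 := by
        funext g; simp [Function.comp, hconjcard g]
      rw [this]
      omega
    have hchain := MinFac.chain L2 hL2supp
    rw [hL2prod] at hchain
    omega
  -- Step 2: every orbit of ρ meets S.
  have hsurj : ∀ y : Fin n, ∃ a ∈ S, ρ.SameCycle y a := by
    intro y
    by_contra hcon
    push_neg at hcon
    have havoid : ∀ z, ρ.SameCycle y z → z ∉ S := fun z hz hzS => hcon z hzS hz
    have key := MinFac.pow_eq_of_avoid σ (finRotate n) y havoid
    obtain ⟨s₀, hs₀⟩ : S.Nonempty := Finset.card_pos.mp (by omega)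
    have hcyc' : (finRotate n).IsCycle := isCycle_finRotate_of_le hn2
    have hsupp : (finRotate n).support = Finset.univ := support_finRotate_of_le hn2
    have h1 : finRotate n y ≠ y :=
      Equiv.Perm.mem_support.mp (by rw [hsupp]; exact Finset.mem_univ y)
    have h2 : finRotate n s₀ ≠ s₀ :=
      Equiv.Perm.mem_support.mp (by rw [hsupp]; exact Finset.mem_univ s₀)
    obtain ⟨i, _, hi⟩ := (hcyc'.sameCycle h1 h2).exists_pow_eq'
    exact hcon s₀ hs₀ ⟨(i : ℤ), by rw [zpow_natCast, key i, hi]⟩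
  -- Step 3: distinct elements of S lie in distinct orbits of ρ.
  have hinj : ∀ a ∈ S, ∀ b ∈ S, ρ.SameCycle a b → a = b := by
    have horbs_eq : MinFac.orbs ρ = S.image (MinFac.orbF ρ) := by
      apply Finset.Subset.antisymm
      · intro t ht
        obtain ⟨y, _, rfl⟩ := Finset.mem_image.mp ht
        obtain ⟨a, ha, hya⟩ := hsurj y
        exact Finset.mem_image.mpr ⟨a, ha, (MinFac.orbF_eq_iff.mpr hya).symm⟩
      · exact Finset.image_subset_image (Finset.subset_univ S)
    have hcardim : (S.image (MinFac.orbF ρ)).card = S.card := by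
      have h1 : (S.image (MinFac.orbF ρ)).card ≤ S.card := Finset.card_image_le
      have h2 : k ≤ (S.image (MinFac.orbF ρ)).card := by rw [← horbs_eq]; exact hNρ
      omega
    have hinjOn := Finset.card_image_iff.mp hcardim
    intro a ha b hb hab
    exact hinjOn (Finset.mem_coe.mpr ha) (Finset.mem_coe.mpr hb)
      (MinFac.orbF_eq_iff.mpr hab)
  -- Step 4: conclude σ is the increasing cycle on S.
  set s := S.sort (· ≤ ·) with hsdef
  have hslen : s.length = k := Finset.length_sort _
  have hsnodup : s.Nodup := Finset.sort_nodup _ _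
  have hsmem : ∀ a : Fin n, a ∈ s ↔ a ∈ S := fun a => Finset.mem_sort _
  have hsorted : s.Pairwise (· < ·) := (Finset.sortedLT_sort S).pairwise
  have hpl : ∀ (i j : ℕ) (hi : i < s.length) (hj : j < s.length), i < j → s[i] < s[j] :=
    fun i j hi hj hij => List.pairwise_iff_getElem.mp hsorted i j hi hj hij
  refine ⟨s, hsorted, ?_⟩
  apply Equiv.ext
  intro x
  by_cases hxS : x ∈ S
  · obtain ⟨i, hi, rfl⟩ := List.getElem_of_mem ((hsmem x).mpr hxS)
    rw [List.formPerm_apply_getElem _ hsnodup i hi]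
    have hj : (i + 1) % s.length < s.length := Nat.mod_lt _ (by omega)
    set b := s[(i + 1) % s.length] with hbdef
    have hbS : b ∈ S := (hsmem b).mp (List.getElem_mem _)
    have hxS' : s[i] ∈ S := (hsmem _).mp (List.getElem_mem _)
    obtain ⟨d, hd0, hbet, hxd⟩ : ∃ d : ℕ, 0 < d ∧
        (∀ jj : ℕ, 0 < jj → jj < d → s[i] + (jj : Fin n) ∉ S) ∧
        s[i] + (d : Fin n) = b := by
      have hxn := (s[i]).isLt
      have hbn := b.isLt
      by_cases hcase : i + 1 < s.length
      · have hjeq : (i + 1) % s.length = i + 1 := Nat.mod_eq_of_lt hcase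
        simp only [hjeq] at hbdef
        have hlt : (s[i] : ℕ) < (b : ℕ) := by
          have := hpl i (i + 1) hi hcase (by omega)
          rw [Fin.lt_def] at this
          rw [hbdef]; exact this
        refine ⟨(b : ℕ) - (s[i] : ℕ), by omega, ?_, ?_⟩
        · intro jj h1 h2 hmem
          have hval : (s[i] + (jj : Fin n)).val = (s[i] : ℕ) + jj := by
            rw [Fin.val_add, Fin.val_natCast, Nat.mod_eq_of_lt (by omega : jj < n),
              Nat.mod_eq_of_lt (by omega)]
          obtain ⟨t, ht, hts⟩ := List.getElem_of_mem ((hsmem _).mpr hmem)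
          have htsv : (s[t] : ℕ) = (s[i] : ℕ) + jj := by rw [hts]; exact hval
          have hbv : (b : ℕ) = (s[i + 1] : ℕ) := by rw [hbdef]
          have hti : i < t := by
            rcases lt_trichotomy t i with h | h | h
            · have := hpl t i ht hi h
              rw [Fin.lt_def] at this
              omega
            · subst h; omega
            · exact h
          have hti2 : t < i + 1 := by
            rcases Nat.lt_or_ge t (i + 1) with h | h
            · exact h
            · rcases Nat.eq_or_lt_of_le h with h' | h'
              · subst h'; omega
              · have := hpl (i + 1) t hcase ht h'
                rw [Fin.lt_def] at this
                omega
          omega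
        · apply Fin.ext
          rw [Fin.val_add, Fin.val_natCast]
          rw [Nat.mod_eq_of_lt (by omega : (b : ℕ) - (s[i] : ℕ) < n)]
          have h' : (s[i] : ℕ) + ((b : ℕ) - (s[i] : ℕ)) = (b : ℕ) := by omega
          rw [h', Nat.mod_eq_of_lt hbn]
      · have hieq : i + 1 = s.length := by omega
        have hjeq : (i + 1) % s.length = 0 := by rw [hieq, Nat.mod_self]
        simp only [hjeq] at hbdef
        have hlen2 : 2 ≤ s.length := by omega
        have h0i : 0 < i := by omega
        have hlt : (b : ℕ) < (s[i] : ℕ) := by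
          have := hpl 0 i (by omega) hi h0i
          rw [Fin.lt_def] at this
          rw [hbdef]; exact this
        refine ⟨n - (s[i] : ℕ) + (b : ℕ), by omega, ?_, ?_⟩
        · intro jj h1 h2 hmem
          obtain ⟨t, ht, hts⟩ := List.getElem_of_mem ((hsmem _).mpr hmem)
          have hjjn : jj < n := by omega
          have hval : (s[i] + (jj : Fin n)).val = ((s[i] : ℕ) + jj) % n := by
            rw [Fin.val_add, Fin.val_natCast, Nat.mod_eq_of_lt hjjn]
          have htle : t ≤ i := by omega
          by_cases hc2 : (s[i] : ℕ) + jj < n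
          · have htsv : (s[t] : ℕ) = (s[i] : ℕ) + jj := by
              rw [hts, hval, Nat.mod_eq_of_lt hc2]
            have hle : (s[t] : ℕ) ≤ (s[i] : ℕ) := by
              rcases Nat.eq_or_lt_of_le htle with h | h
              · subst h; omega
              · have := hpl t i ht hi h
                rw [Fin.lt_def] at this
                omega
            omega
          · have htsv : (s[t] : ℕ) = (s[i] : ℕ) + jj - n := by
              rw [hts, hval, Nat.mod_eq_sub_mod (by omega), Nat.mod_eq_of_lt (by omega)]
            have hble : (b : ℕ) ≤ (s[t] : ℕ) := by
              have hbv : (b : ℕ) = (s[0] : ℕ) := by rw [hbdef]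
              rcases Nat.eq_zero_or_pos t with h | h
              · subst h; omega
              · have := hpl 0 t (by omega) ht h
                rw [Fin.lt_def] at this
                omega
            omega
        · apply Fin.ext
          rw [Fin.val_add, Fin.val_natCast]
          rw [Nat.mod_eq_of_lt (by omega : n - (s[i] : ℕ) + (b : ℕ) < n)]
          have h' : (s[i] : ℕ) + (n - (s[i] : ℕ) + (b : ℕ)) = n + (b : ℕ) := by omega
          rw [h', Nat.add_mod_left, Nat.mod_eq_of_lt hbn]
    have hSC : ρ.SameCycle s[i] (σ⁻¹ b) := by
      refine ⟨(d : ℤ), ?_⟩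
      rw [zpow_natCast, hρdef, MinFac.walk σ d s[i] hd0 hbet, hxd]
    have hσbS : σ⁻¹ b ∈ S := by
      have h' : σ (σ⁻¹ b) ∈ σ.support ↔ σ⁻¹ b ∈ σ.support := Equiv.Perm.apply_mem_support
      rw [← Equiv.Perm.mul_apply, mul_inv_cancel, Equiv.Perm.one_apply] at h'
      exact h'.mp hbS
    have heq := hinj _ hxS' _ hσbS hSC
    rw [heq, ← Equiv.Perm.mul_apply, mul_inv_cancel, Equiv.Perm.one_apply]
  · have h1 : σ x = x := Equiv.Perm.notMem_support.mp hxS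
    have h2 : x ∉ s := fun hc => hxS ((hsmem x).mp hc)
    rw [List.formPerm_apply_of_notMem h2, h1]
end

section
/- In a minimal factorization σ_m ⋯ σ_1 = (1 2 … n) of the n-cycle, the supports of any two distinct factors σ_i and σ_j intersect in at most one point. -/
open Relation

section Counting

variable {α : Type*}

/-- Two points are directly linked if some set of the family contains both. -/
def share (M : Multiset (Finset α)) (x y : α) : Prop := ∃ s ∈ M, x ∈ s ∧ y ∈ s

/-- The equivalence relation generated by the family. -/
def stM (M : Multiset (Finset α)) : Setoid α := EqvGen.setoid (share M)

lemma relM_of_mk_eq {M : Multiset (Finset α)} {x y : α}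
    (h : Quotient.mk (stM M) x = Quotient.mk (stM M) y) : EqvGen (share M) x y :=
  Quotient.exact h

lemma mk_eq_of_relM {M : Multiset (Finset α)} {x y : α}
    (h : EqvGen (share M) x y) : Quotient.mk (stM M) x = Quotient.mk (stM M) y :=
  Quotient.sound h

/-- Paths in `s ::ₘ t` either stay within the `t`-relation or connect both
endpoints to `s` through the `t`-relation. -/
lemma reach {s : Finset α} {t : Multiset (Finset α)} {x y : α}
    (h : EqvGen (share (s ::ₘ t)) x y) :
    EqvGen (share t) x y ∨
      ((∃ u ∈ s, EqvGen (share t) x u) ∧ (∃ v ∈ s, EqvGen (share t) y v)) := by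
  induction h with
  | rel a b hab =>
    obtain ⟨S, hS, haS, hbS⟩ := hab
    rcases Multiset.mem_cons.mp hS with rfl | hS'
    · exact Or.inr ⟨⟨a, haS, EqvGen.refl a⟩, ⟨b, hbS, EqvGen.refl b⟩⟩
    · exact Or.inl (EqvGen.rel _ _ ⟨S, hS', haS, hbS⟩)
  | refl a => exact Or.inl (EqvGen.refl a)
  | symm a b _ ih =>
    rcases ih with h | ⟨h1, h2⟩
    · exact Or.inl (EqvGen.symm _ _ h)
    · exact Or.inr ⟨h2, h1⟩
  | trans a b c hab hbc ih1 ih2 =>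
    rcases ih1 with h1 | ⟨h1x, u, hu, hbu⟩
    · rcases ih2 with h2 | ⟨⟨v, hv, hbv⟩, h2c⟩
      · exact Or.inl (EqvGen.trans _ _ _ h1 h2)
      · exact Or.inr ⟨⟨v, hv, EqvGen.trans _ _ _ h1 hbv⟩, h2c⟩
    · rcases ih2 with h2 | ⟨_, h2c⟩
      · exact Or.inr ⟨h1x, ⟨u, hu, EqvGen.trans _ _ _ (EqvGen.symm _ _ h2) hbu⟩⟩
      · exact Or.inr ⟨h1x, h2c⟩

open Classical in
/-- The fiber-accounting injection. -/
noncomputable def fiberMap (s : Finset α) (t : Multiset (Finset α)) (a : α) (ha : a ∈ s)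
    (D : Quotient (stM t)) :
    {q : Quotient (stM (s ::ₘ t)) // q ≠ Quotient.mk _ a} ⊕ {u : α // u ∈ s} :=
  if h : ∃ u ∈ s, EqvGen (share t) D.out u then
    Sum.inr ⟨h.choose, h.choose_spec.1⟩
  else
    Sum.inl ⟨Quotient.mk _ D.out, by
      intro hEq
      rcases reach (relM_of_mk_eq hEq) with h' | ⟨h', _⟩
      · exact h ⟨a, ha, h'⟩
      · exact h h'⟩

lemma fiberMap_injective (s : Finset α) (t : Multiset (Finset α)) (a : α) (ha : a ∈ s) :
    Function.Injective (fiberMap s t a ha) := by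
  intro D D' hDD
  unfold fiberMap at hDD
  by_cases h : ∃ u ∈ s, EqvGen (share t) D.out u <;>
    by_cases h' : ∃ u ∈ s, EqvGen (share t) D'.out u
  · -- both inr
    rw [dif_pos h, dif_pos h'] at hDD
    have e : h.choose = h'.choose := congrArg Subtype.val (Sum.inr.inj hDD)
    have r1 := h.choose_spec.2
    have r2 := h'.choose_spec.2
    rw [e] at r1
    have : EqvGen (share t) D.out D'.out :=
      EqvGen.trans _ _ _ r1 (EqvGen.symm _ _ r2)
    rw [← Quotient.out_eq D, ← Quotient.out_eq D']
    exact mk_eq_of_relM this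
  · rw [dif_pos h, dif_neg h'] at hDD; exact absurd hDD (by simp)
  · rw [dif_neg h, dif_pos h'] at hDD; exact absurd hDD (by simp)
  · -- both inl
    rw [dif_neg h, dif_neg h'] at hDD
    have e : Quotient.mk (stM (s ::ₘ t)) D.out = Quotient.mk (stM (s ::ₘ t)) D'.out :=
      congrArg Subtype.val (Sum.inl.inj hDD)
    rcases reach (relM_of_mk_eq e) with hh | ⟨hh, _⟩
    · rw [← Quotient.out_eq D, ← Quotient.out_eq D']
      exact mk_eq_of_relM hh
    · exact absurd hh h

lemma card_quot_step [Finite α] [Nonempty α] (s : Finset α) (t : Multiset (Finset α)) :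
    Nat.card (Quotient (stM t)) ≤ Nat.card (Quotient (stM (s ::ₘ t))) + (s.card - 1) := by
  rcases s.eq_empty_or_nonempty with rfl | ⟨a, ha⟩
  · -- empty set: the quotient map is injective
    have inj : Function.Injective
        (fun D : Quotient (stM t) =>
          Quotient.mk (stM ((∅ : Finset α) ::ₘ t)) (Quotient.out D)) := by
      intro D D' hDD
      rcases reach (relM_of_mk_eq hDD) with hh | ⟨⟨u, hu, _⟩, _⟩
      · rw [← Quotient.out_eq D, ← Quotient.out_eq D']
        exact mk_eq_of_relM hh
      · simp at hu
    have := Nat.card_le_card_of_injective _ inj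
    simpa using this
  · classical
    have hinj := fiberMap_injective s t a ha
    have hle := Nat.card_le_card_of_injective _ hinj
    letI : Fintype (Quotient (stM (s ::ₘ t))) := Fintype.ofFinite _
    letI : Fintype (Quotient (stM t)) := Fintype.ofFinite _
    rw [Nat.card_sum] at hle
    have h1 : Nat.card {q : Quotient (stM (s ::ₘ t)) // q ≠ Quotient.mk _ a}
        = Fintype.card (Quotient (stM (s ::ₘ t)))
          - Fintype.card {q : Quotient (stM (s ::ₘ t)) // q = Quotient.mk _ a} := by
      rw [Nat.card_eq_fintype_card]
      exact Fintype.card_subtype_compl _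
    have h2 : Fintype.card {q : Quotient (stM (s ::ₘ t)) // q = Quotient.mk _ a} = 1 :=
      Fintype.card_subtype_eq _
    have h3 : Nat.card {u : α // u ∈ s} = s.card := by
      rw [Nat.card_eq_fintype_card]
      exact Fintype.card_coe s
    haveI : Nonempty (Quotient (stM (s ::ₘ t))) := ⟨Quotient.mk _ (Classical.arbitrary α)⟩
    have h4 : 0 < Fintype.card (Quotient (stM (s ::ₘ t))) := Fintype.card_pos
    have h5 : 1 ≤ s.card := Finset.card_pos.mpr ⟨a, ha⟩
    rw [h1, h2, h3] at hle
    rw [Nat.card_eq_fintype_card, Nat.card_eq_fintype_card] at *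
    omega

lemma relM_zero {x y : α} (h : EqvGen (share (0 : Multiset (Finset α))) x y) : x = y := by
  induction h with
  | rel a b hab => obtain ⟨S, hS, -⟩ := hab; simp at hS
  | refl a => rfl
  | symm a b _ ih => exact ih.symm
  | trans a b c _ _ ih1 ih2 => exact ih1.trans ih2

lemma card_le_count [Finite α] [Nonempty α] (M : Multiset (Finset α)) :
    Nat.card α ≤ (M.map fun s => s.card - 1).sum + Nat.card (Quotient (stM M)) := by
  induction M using Multiset.induction_on with
  | empty =>
    have inj : Function.Injective (fun x : α => Quotient.mk (stM (0 : Multiset (Finset α))) x) :=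
      fun x y hxy => relM_zero (relM_of_mk_eq hxy)
    simpa using Nat.card_le_card_of_injective _ inj
  | cons s t ih =>
    have := card_quot_step s t (α := α)
    calc Nat.card α ≤ (t.map fun s => s.card - 1).sum + Nat.card (Quotient (stM t)) := ih
      _ ≤ (t.map fun s => s.card - 1).sum + (Nat.card (Quotient (stM (s ::ₘ t))) + (s.card - 1)) :=
          by omega
      _ = ((s ::ₘ t).map fun s => s.card - 1).sum + Nat.card (Quotient (stM (s ::ₘ t))) := by
          rw [Multiset.map_cons, Multiset.sum_cons]; ring

end Counting

section Connect

variable {α : Type*} [DecidableEq α] [Fintype α]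

lemma rel_apply_prod (l : List (Equiv.Perm α)) (x : α) :
    EqvGen (share (↑(l.map Equiv.Perm.support) : Multiset (Finset α))) x (l.prod x) := by
  induction l generalizing x with
  | nil => simpa using EqvGen.refl x
  | cons σ t ih =>
    have hcoe : (↑((σ :: t).map Equiv.Perm.support) : Multiset (Finset α))
        = σ.support ::ₘ ↑(t.map Equiv.Perm.support) := by
      simp [List.map_cons]
    rw [hcoe]
    have h1 : EqvGen (share (σ.support ::ₘ ↑(t.map Equiv.Perm.support))) x (t.prod x) := by
      refine Relation.EqvGen.mono ?_ _ _ (ih x)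
      rintro a b ⟨S, hS, haS, hbS⟩
      exact ⟨S, Multiset.mem_cons_of_mem hS, haS, hbS⟩
    have hval : (σ :: t).prod x = σ (t.prod x) := by
      rw [List.prod_cons, Equiv.Perm.mul_apply]
    rw [hval]
    by_cases hfix : σ (t.prod x) = t.prod x
    · rw [hfix]; exact h1
    · refine EqvGen.trans _ _ _ h1 (EqvGen.rel _ _ ?_)
      exact ⟨σ.support, Multiset.mem_cons_self _ _,
        Equiv.Perm.mem_support.mpr hfix,
        Equiv.Perm.apply_mem_support.mpr (Equiv.Perm.mem_support.mpr hfix)⟩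

lemma rel_apply_pow (l : List (Equiv.Perm α)) (k : ℕ) (x : α) :
    EqvGen (share (↑(l.map Equiv.Perm.support) : Multiset (Finset α))) x (((l.prod) ^ k) x) := by
  induction k generalizing x with
  | zero => simpa using EqvGen.refl x
  | succ k ih =>
    rw [pow_succ, Equiv.Perm.mul_apply]
    exact EqvGen.trans _ _ _ (rel_apply_prod l x) (ih (l.prod x))

end Connect

open Fin.NatCast Fin.CommRing in
/-- In `Fin (m+1)`, iterating `finRotate` reaches everything. -/
lemma finRotate_pow_apply (m : ℕ) (k : ℕ) (x : Fin (m + 1)) :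
    ((finRotate (m + 1)) ^ k) x = x + (k : Fin (m + 1)) := by
  induction k with
  | zero => simp
  | succ k ih =>
    rw [pow_succ', Equiv.Perm.mul_apply, ih, finRotate_succ_apply]
    push_cast
    ring

/-- Splitting a list along two indices, as multisets. -/
lemma coe_split {β : Type*} [DecidableEq β] (L : List β) (i j : ℕ) (hij : i < j)
    (hj : j < L.length) :
    ∃ r : Multiset β, (↑L : Multiset β) = (L[i]'(lt_trans hij hj)) ::ₘ (L[j]'hj) ::ₘ r := by
  induction L generalizing i j with
  | nil => simp at hj
  | cons x t ih =>
    match i, j with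
    | 0, (jj + 1) =>
      have hjj : jj < t.length := by simpa using hj
      have hmem : t[jj] ∈ (↑t : Multiset β) := Multiset.mem_coe.mpr (List.getElem_mem hjj)
      refine ⟨(↑t : Multiset β).erase t[jj], ?_⟩
      rw [← Multiset.cons_coe]
      simp only [List.getElem_cons_zero, List.getElem_cons_succ]
      rw [Multiset.cons_erase hmem]
    | (ii + 1), (jj + 1) =>
      have hjj : jj < t.length := by simpa using hj
      obtain ⟨r, hr⟩ := ih ii jj (by omega) hjj
      refine ⟨x ::ₘ r, ?_⟩
      rw [← Multiset.cons_coe, hr]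
      simp only [List.getElem_cons_succ]
      rw [Multiset.cons_swap x, Multiset.cons_swap x]

/-- in a minimal factorization of the `n`-cycle `(1 2 … n)`
(realized as `finRotate n`), the supports of any two distinct factors
intersect in at most one point. -/
theorem supports_meet_in_at_most_one_point (n : ℕ)
    (l : List (Equiv.Perm (Fin n)))
    (hcyc : ∀ σ ∈ l, σ.IsCycle ∧ 2 ≤ σ.support.card)
    (hprod : l.prod = finRotate n)
    (hmin : (l.map fun σ => σ.support.card - 1).sum = n - 1) :
    ∀ i j : Fin l.length, i ≠ j →
      ((l.get i).support ∩ (l.get j).support).card ≤ 1 := by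
  have key : ∀ i j : Fin l.length, (i : ℕ) < (j : ℕ) →
      2 ≤ ((l.get i).support ∩ (l.get j).support).card → False := by
    intro i j hij h2
    -- basic facts
    have hmemi : l.get i ∈ l := l.get_mem i
    have hn2 : 2 ≤ n := by
      have := (hcyc _ hmemi).2
      have hle : (l.get i).support.card ≤ Fintype.card (Fin n) := Finset.card_le_univ _
      rw [Fintype.card_fin] at hle
      omega
    obtain ⟨m, rfl⟩ : ∃ m, n = m + 1 := ⟨n - 1, by omega⟩
    set Si := (l.get i).support with hSi
    set Sj := (l.get j).support with hSj
    set L := l.map Equiv.Perm.support with hL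
    have hgeti : L[(i : ℕ)]'(by simp [hL, i.isLt]) = Si := by
      simp [hL, hSi, List.getElem_map]
    have hgetj : L[(j : ℕ)]'(by simp [hL, j.isLt]) = Sj := by
      simp [hL, hSj, List.getElem_map]
    obtain ⟨r, hr⟩ := coe_split L (i : ℕ) (j : ℕ) hij (by simp [hL, j.isLt])
    rw [hgeti, hgetj] at hr
    set M : Multiset (Finset (Fin (m + 1))) := ↑L with hM
    set M' : Multiset (Finset (Fin (m + 1))) := (Si ∪ Sj) ::ₘ r with hM'
    -- connectivity of M'
    have hconn : ∀ x y : Fin (m + 1), EqvGen (share M') x y := by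
      have hconnM : ∀ x y : Fin (m + 1), EqvGen (share M) x y := by
        intro x y
        have hk : ∀ k : ℕ, EqvGen (share M) x ((l.prod ^ k) x) := fun k => rel_apply_pow l k x
        have := hk ((y - x) : Fin (m + 1)).val
        rw [hprod, finRotate_pow_apply, Fin.cast_val_eq_self] at this
        simpa using this
      intro x y
      refine Relation.EqvGen.mono ?_ _ _ (hconnM x y)
      rintro a b ⟨S, hS, haS, hbS⟩
      rw [hr] at hS
      rcases Multiset.mem_cons.mp hS with rfl | hS
      · exact ⟨Si ∪ Sj, Multiset.mem_cons_self _ _,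
          Finset.mem_union_left _ haS, Finset.mem_union_left _ hbS⟩
      rcases Multiset.mem_cons.mp hS with rfl | hS
      · exact ⟨Si ∪ Sj, Multiset.mem_cons_self _ _,
          Finset.mem_union_right _ haS, Finset.mem_union_right _ hbS⟩
      · exact ⟨S, Multiset.mem_cons_of_mem hS, haS, hbS⟩
    -- quotient by M' is a single class
    have hcard1 : Nat.card (Quotient (stM M')) = 1 := by
      rw [Nat.card_eq_one_iff_unique]
      constructor
      · constructor
        intro q1 q2
        refine Quotient.inductionOn₂ q1 q2 (fun x y => ?_)
        exact mk_eq_of_relM (hconn x y)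
      · exact ⟨Quotient.mk _ 0⟩
    -- counting
    have hcount := card_le_count (α := Fin (m + 1)) M'
    rw [hcard1, Nat.card_eq_fintype_card, Fintype.card_fin] at hcount
    -- sums
    have hsumM : (M.map fun s => s.card - 1).sum = m := by
      have : (M.map fun s => s.card - 1) = ↑(l.map fun σ => σ.support.card - 1) := by
        rw [hM, hL, Multiset.map_coe, List.map_map]
        rfl
      rw [this, Multiset.sum_coe, hmin]
      omega
    rw [hr] at hsumM
    rw [hM'] at hcount
    simp only [Multiset.map_cons, Multiset.sum_cons] at hsumM hcount
    have hub : (Si ∪ Sj).card + (Si ∩ Sj).card = Si.card + Sj.card :=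
      Finset.card_union_add_card_inter Si Sj
    have hi2 : 2 ≤ Si.card := (hcyc _ hmemi).2
    have hj2 : 2 ≤ Sj.card := (hcyc _ (l.get_mem j)).2
    omega
  intro i j hij
  by_contra hc
  have h2 : 2 ≤ ((l.get i).support ∩ (l.get j).support).card := by omega
  rcases lt_trichotomy (i : ℕ) (j : ℕ) with h | h | h
  · exact key i j h h2
  · exact hij (Fin.ext h)
  · exact key j i h (by rwa [Finset.inter_comm])
end

section
/- The formal power series ξ̃(r) defined by ξ̃ = 1 − r ξ̃³ − r² ξ̃⁵ − r³ ξ̃⁷ − ⋯ satisfies the quadratic equation r ξ̃² + ξ̃ − 1 = 0, and hence ξ̃(r) = ∑_{n≥0} (−1)^n C_n r^n where C_n is the n-th Catalan number. -/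
open PowerSeries

noncomputable def etaCat : PowerSeries ℚ :=
  PowerSeries.mk fun n => (-1 : ℚ) ^ n * (catalan n : ℚ)

lemma coeff_etaCat (n : ℕ) :
    PowerSeries.coeff (R := ℚ) n etaCat = (-1 : ℚ) ^ n * (catalan n : ℚ) :=
  PowerSeries.coeff_mk _ _

lemma etaCat_quad : PowerSeries.X * etaCat ^ 2 + etaCat - 1 = 0 := by
  ext n
  rcases n with _ | n
  · simp [etaCat, sq]
  · have h2 : PowerSeries.coeff (R := ℚ) n (etaCat ^ 2) =
        (-1 : ℚ) ^ n * (catalan (n + 1) : ℚ) := by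
      rw [sq, PowerSeries.coeff_mul, catalan_succ']
      push_cast
      rw [Finset.mul_sum]
      refine Finset.sum_congr rfl fun p hp => ?_
      rw [Finset.HasAntidiagonal.mem_antidiagonal] at hp
      simp only [coeff_etaCat]
      rw [← hp, pow_add]
      ring
    simp only [map_add, map_sub, PowerSeries.coeff_succ_X_mul, h2, coeff_etaCat,
      map_zero, PowerSeries.coeff_one, Nat.succ_ne_zero, if_false]
    ring

lemma etaCat_sub : (1 : PowerSeries ℚ) - etaCat = PowerSeries.X * etaCat ^ 2 := by
  have := etaCat_quad
  linear_combination -this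

lemma tele (y : PowerSeries ℚ) (n : ℕ) :
    ∑ k ∈ Finset.Icc 1 n, y ^ k * (1 - y) = y - y ^ (n + 1) := by
  induction n with
  | zero => simp
  | succ n ih =>
      rw [Finset.sum_Icc_succ_top (Nat.one_le_iff_ne_zero.mpr (Nat.succ_ne_zero n)), ih]
      ring

lemma etaCat_h (n : ℕ) :
    PowerSeries.coeff (R := ℚ) n etaCat =
      PowerSeries.coeff (R := ℚ) n (1 : PowerSeries ℚ) -
      ∑ k ∈ Finset.Icc 1 n,
        PowerSeries.coeff (R := ℚ) n (PowerSeries.X ^ k * etaCat ^ (2 * k + 1)) := by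
  have hterm : ∀ k : ℕ, PowerSeries.X ^ k * etaCat ^ (2 * k + 1)
      = ((1 : PowerSeries ℚ) - etaCat) ^ k * etaCat := by
    intro k
    rw [etaCat_sub, mul_pow, ← pow_mul, mul_assoc, ← pow_succ]
  have hsum : ∑ k ∈ Finset.Icc 1 n,
      PowerSeries.coeff (R := ℚ) n (PowerSeries.X ^ k * etaCat ^ (2 * k + 1)) =
      PowerSeries.coeff (R := ℚ) n
        ((1 - etaCat) - (1 - etaCat) ^ (n + 1)) := by
    rw [← tele (1 - etaCat) n, map_sum]
    refine Finset.sum_congr rfl fun k _ => ?_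
    rw [hterm k]
    ring_nf
  have hvanish : PowerSeries.coeff (R := ℚ) n (((1 : PowerSeries ℚ) - etaCat) ^ (n + 1)) = 0 := by
    rw [etaCat_sub, mul_pow, ← pow_mul, PowerSeries.coeff_X_pow_mul']
    simp
  rw [hsum, map_sub, hvanish, map_sub, sub_zero]
  ring

lemma coeff_pow_congr (f g : PowerSeries ℚ) :
    ∀ (j m : ℕ), (∀ i ≤ m, PowerSeries.coeff (R := ℚ) i f = PowerSeries.coeff (R := ℚ) i g) →
      PowerSeries.coeff (R := ℚ) m (f ^ j) = PowerSeries.coeff (R := ℚ) m (g ^ j) := by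
  intro j
  induction j with
  | zero => intro m _; simp
  | succ j ih =>
      intro m hm
      rw [pow_succ, pow_succ, PowerSeries.coeff_mul, PowerSeries.coeff_mul]
      refine Finset.sum_congr rfl fun p hp => ?_
      rw [Finset.HasAntidiagonal.mem_antidiagonal] at hp
      rw [ih p.1 (fun i hi => hm i (hi.trans (hp ▸ Nat.le_add_right _ _))),
        hm p.2 (hp ▸ Nat.le_add_left _ _)]

/-- if the formal power series `ξ̃ ∈ ℚ[[r]]` satisfies
`ξ̃ = 1 − r ξ̃³ − r² ξ̃⁵ − r³ ξ̃⁷ − ⋯` (stated coefficient-wise; the term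
`r^k ξ̃^{2k+1}` has zero coefficient in degree `n` when `k > n`), then
`r ξ̃² + ξ̃ − 1 = 0`, and hence the coefficients of `ξ̃` are the signed
Catalan numbers: `ξ̃ = ∑_{n≥0} (−1)^n C_n r^n`. -/
theorem xiTilde_quadratic_and_catalan (ξ : PowerSeries ℚ)
    (h : ∀ n : ℕ,
      PowerSeries.coeff (R := ℚ) n ξ =
        PowerSeries.coeff (R := ℚ) n (1 : PowerSeries ℚ) -
        ∑ k ∈ Finset.Icc 1 n,
          PowerSeries.coeff (R := ℚ) n (PowerSeries.X ^ k * ξ ^ (2 * k + 1))) :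
    PowerSeries.X * ξ ^ 2 + ξ - 1 = 0 ∧
    ∀ n : ℕ, PowerSeries.coeff (R := ℚ) n ξ = (-1 : ℚ) ^ n * (catalan n : ℚ) := by
  have key : ∀ n : ℕ, PowerSeries.coeff (R := ℚ) n ξ = PowerSeries.coeff (R := ℚ) n etaCat := by
    intro n
    induction n using Nat.strong_induction_on with
    | _ n ih =>
      rw [h n, etaCat_h n]
      congr 1
      refine Finset.sum_congr rfl fun k hk => ?_
      rw [Finset.mem_Icc] at hk
      rw [PowerSeries.coeff_X_pow_mul' , PowerSeries.coeff_X_pow_mul', if_pos hk.2, if_pos hk.2]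
      exact coeff_pow_congr ξ etaCat _ _ fun i hi =>
        ih i (lt_of_le_of_lt hi (by omega))
  have hxe : ξ = etaCat := PowerSeries.ext key
  subst hxe
  exact ⟨etaCat_quad, fun n => coeff_etaCat n⟩
end

section
/- A multiset of cycles σ_1, …, σ_m in S_n can be ordered so that their product equals the n-cycle (1 2 … n) only if all of the cycles are increasing (each cycle, written starting with its smallest element, has strictly increasing entries). -/
open Equiv Equiv.Perm

namespace IncAux

variable {α : Type*}

/-- The orbit setoid of a permutation. -/
def sc (π : Equiv.Perm α) : Setoid α :=
  ⟨π.SameCycle, ⟨fun _ => Equiv.Perm.SameCycle.refl _ _, fun h => h.symm, fun h h' => h.trans h'⟩⟩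

/-- Number of orbits (cycles including fixed points). -/
noncomputable def orbits (π : Equiv.Perm α) : ℕ := Nat.card (Quotient (sc π))

theorem const_on_orbits [Finite α] {π : Equiv.Perm α} {β : Sort*} {f : α → β}
    (hf : ∀ x, f (π x) = f x) : ∀ {x y}, π.SameCycle x y → f x = f y := by
  have key : ∀ (i : ℕ) (x : α), f x = f ((π ^ i) x) := by
    intro i
    induction i with
    | zero => intro x; simp
    | succ i ih =>
      intro x
      rw [pow_succ, Equiv.Perm.mul_apply]
      exact ((hf x).symm).trans (ih (π x))
  intro x y h
  obtain ⟨i, _, rfl⟩ := h.exists_pow_eq'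
  exact key i x

theorem orbits_one [Finite α] : orbits (1 : Equiv.Perm α) = Nat.card α := by
  refine (Nat.card_eq_of_bijective (fun x : α => Quotient.mk (sc 1) x) ⟨?_, ?_⟩).symm
  · intro x y h
    exact Equiv.Perm.sameCycle_one.mp (Quotient.exact h)
  · intro q
    obtain ⟨x, rfl⟩ := Quotient.exists_rep q
    exact ⟨x, rfl⟩

theorem orbits_le [Finite α] [DecidableEq α] (π : Equiv.Perm α) (a b : α) :
    orbits π ≤ orbits (Equiv.swap a b * π) + 1 := by
  classical
  set ρ := Equiv.swap a b * π with hρ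
  have hπ : π = Equiv.swap a b * ρ := by rw [hρ, ← mul_assoc, Equiv.swap_mul_self, one_mul]
  have hpt : ∀ x, π x = Equiv.swap a b (ρ x) := by
    intro x; conv_lhs => rw [hπ]
    rw [Equiv.Perm.mul_apply]
  set r : α → α → Prop := fun x y => ρ.SameCycle x y ∨ (x = a ∧ y = b) with hr
  have hab : Relation.EqvGen r a b := Relation.EqvGen.rel a b (Or.inr ⟨rfl, rfl⟩)
  have hstep : ∀ x, Relation.EqvGen r x (π x) := by
    intro x
    have h1 : Relation.EqvGen r x (ρ x) := Relation.EqvGen.rel _ _ (Or.inl ⟨1, by simp⟩)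
    rcases eq_or_ne (ρ x) a with h | ha
    · have hb : π x = b := by rw [hpt, h, Equiv.swap_apply_left]
      rw [hb]
      exact h1.trans _ _ _ (h ▸ hab)
    rcases eq_or_ne (ρ x) b with h | hb
    · have hb : π x = a := by rw [hpt, h, Equiv.swap_apply_right]
      rw [hb]
      exact h1.trans _ _ _ (h ▸ hab.symm _ _)
    · have hb : π x = ρ x := by rw [hpt, Equiv.swap_apply_of_ne_of_ne ha hb]
      rw [hb]; exact h1
  have hπR : ∀ x y, π.SameCycle x y → Relation.EqvGen r x y := by
    have key : ∀ (i : ℕ) (x : α), Relation.EqvGen r x ((π ^ i) x) := by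
      intro i
      induction i with
      | zero => intro x; simpa using Relation.EqvGen.refl x
      | succ i ih =>
        intro x
        rw [pow_succ, Equiv.Perm.mul_apply]
        exact (hstep x).trans _ _ _ (ih (π x))
    intro x y h
    obtain ⟨i, _, rfl⟩ := h.exists_pow_eq'
    exact key i x
  set f : α → Quotient (sc π) := fun x =>
    if π.SameCycle x b then Quotient.mk (sc π) a else Quotient.mk (sc π) x with hfdef
  have hfπ : ∀ x y, π.SameCycle x y → f x = f y := by
    intro x y h
    by_cases hb : π.SameCycle x b
    · rw [hfdef]; simp only
      rw [if_pos hb, if_pos (h.symm.trans hb)]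
    · have hb' : ¬ π.SameCycle y b := fun hy => hb (h.trans hy)
      rw [hfdef]; simp only
      rw [if_neg hb, if_neg hb']
      exact Quotient.sound h
  have hfa : f a = Quotient.mk (sc π) a := by
    rw [hfdef]; simp only
    by_cases h : π.SameCycle a b
    · rw [if_pos h]
    · rw [if_neg h]
  have hfb : f b = Quotient.mk (sc π) a := by
    rw [hfdef]; simp only
    rw [if_pos (Equiv.Perm.SameCycle.refl _ _)]
  have hfρ : ∀ x, f (ρ x) = f x := by
    intro x
    have h2 : f (π x) = f x := (hfπ x (π x) ⟨1, by simp⟩).symm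
    rcases eq_or_ne (ρ x) a with h | ha
    · have hb : π x = b := by rw [hpt, h, Equiv.swap_apply_left]
      rw [h, hfa, ← h2, hb, hfb]
    rcases eq_or_ne (ρ x) b with h | hb
    · have hb : π x = a := by rw [hpt, h, Equiv.swap_apply_right]
      rw [h, hfb, ← h2, hb, hfa]
    · have hb : π x = ρ x := by rw [hpt, Equiv.swap_apply_of_ne_of_ne ha hb]
      rw [← hb, h2]
  have hfR : ∀ x y, Relation.EqvGen r x y → f x = f y := by
    intro x y h
    induction h with
    | rel x y h =>
      rcases h with h | ⟨rfl, rfl⟩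
      · exact const_on_orbits hfρ h
      · rw [hfa, hfb]
    | refl x => rfl
    | symm _ _ _ ih => exact ih.symm
    | trans _ _ _ _ _ ih1 ih2 => exact ih1.trans ih2
  set Rs : Setoid α := Relation.EqvGen.setoid r with hRs
  let G : Quotient (sc π) → Quotient Rs :=
    Quotient.lift (fun x => Quotient.mk Rs x) (fun x y h => Quotient.sound (hπR x y h))
  let F : Quotient Rs → Quotient (sc π) := Quotient.lift f (fun x y h => hfR x y h)
  have keyFG : ∀ q, q ≠ Quotient.mk (sc π) b → F (G q) = q := by
    intro q hq
    obtain ⟨x, rfl⟩ := Quotient.exists_rep q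
    have hx : ¬ π.SameCycle x b := fun h => hq (Quotient.sound h)
    show f x = _
    rw [hfdef]; simp only
    rw [if_neg hx]
  let H : Quotient (sc π) → Option (Quotient Rs) :=
    fun q => if q = Quotient.mk (sc π) b then none else some (G q)
  have hinj : Function.Injective H := by
    intro q q' h
    by_cases h1 : q = Quotient.mk (sc π) b <;> by_cases h2 : q' = Quotient.mk (sc π) b
    · rw [h1, h2]
    · simp only [H, if_pos h1, if_neg h2] at h; exact absurd h (by simp)
    · simp only [H, if_neg h1, if_pos h2] at h; exact absurd h (by simp)
    · simp only [H, if_neg h1, if_neg h2, Option.some_inj] at h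
      rw [← keyFG q h1, ← keyFG q' h2, h]
  haveI : Finite (Quotient Rs) := Quotient.finite _
  haveI := Fintype.ofFinite (Quotient Rs)
  have hcard1 : orbits π ≤ Nat.card (Quotient Rs) + 1 := by
    calc orbits π ≤ Nat.card (Option (Quotient Rs)) := Nat.card_le_card_of_injective H hinj
    _ = Nat.card (Quotient Rs) + 1 := Finite.card_option
  have hsurj : Function.Surjective (Quotient.lift (fun x => Quotient.mk Rs x)
      (fun x y (h : (sc ρ) x y) => Quotient.sound (Relation.EqvGen.rel x y (Or.inl h))) :
        Quotient (sc ρ) → Quotient Rs) := by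
    intro q
    obtain ⟨x, rfl⟩ := Quotient.exists_rep q
    exact ⟨Quotient.mk (sc ρ) x, rfl⟩
  have hcard2 : Nat.card (Quotient Rs) ≤ orbits ρ := Nat.card_le_card_of_surjective _ hsurj
  omega

theorem le_orbits_prod [Finite α] [DecidableEq α] (L : List (Equiv.Perm α))
    (hL : ∀ t ∈ L, t.IsSwap) :
    Nat.card α ≤ orbits L.prod + L.length := by
  induction L with
  | nil => simpa using le_of_eq orbits_one.symm
  | cons t L ih =>
    obtain ⟨a, b, -, rfl⟩ := hL t List.mem_cons_self
    have h1 := ih (fun u hu => hL u (List.mem_cons_of_mem _ hu))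
    have h2 := orbits_le L.prod a b
    rw [List.prod_cons, List.length_cons]
    omega

theorem exists_swap_list [Fintype α] [DecidableEq α] :
    ∀ (N : ℕ) (π : Equiv.Perm α), π.support.card ≤ N → π ≠ 1 →
      ∃ L : List (Equiv.Perm α), (∀ t ∈ L, t.IsSwap) ∧ L.length + 1 ≤ π.support.card ∧
        L.prod = π := by
  intro N
  induction N with
  | zero =>
    intro π hc h1
    have := Equiv.Perm.one_lt_card_support_of_ne_one h1
    omega
  | succ N ih =>
    intro π hc h1
    have h2 : 1 < π.support.card := Equiv.Perm.one_lt_card_support_of_ne_one h1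
    obtain ⟨x, hx⟩ : ∃ x, π x ≠ x := by
      by_contra h
      push_neg at h
      exact h1 (Equiv.ext fun y => (h y).trans (Equiv.Perm.one_apply y).symm)
    set τ := Equiv.swap x (π x) * π with hτ
    have hπτ : π = Equiv.swap x (π x) * τ := by
      rw [hτ, ← mul_assoc, Equiv.swap_mul_self, one_mul]
    have hcd : τ.support.card < π.support.card := Equiv.Perm.card_support_swap_mul hx
    by_cases hτ1 : τ = 1
    · refine ⟨[Equiv.swap x (π x)], ?_, ?_, ?_⟩
      · intro t ht
        simp only [List.mem_singleton] at ht
        exact ht ▸ ⟨x, π x, Ne.symm hx, rfl⟩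
      · simp only [List.length_singleton]; omega
      · rw [List.prod_singleton]
        conv_rhs => rw [hπτ, hτ1, mul_one]
    · obtain ⟨L, hs, hlen, hprod⟩ := ih τ (by omega) hτ1
      refine ⟨Equiv.swap x (π x) :: L, ?_, ?_, ?_⟩
      · intro t ht
        rcases List.mem_cons.mp ht with rfl | ht
        · exact ⟨x, π x, Ne.symm hx, rfl⟩
        · exact hs t ht
      · rw [List.length_cons]; omega
      · rw [List.prod_cons, hprod, ← hπτ]

theorem conj_swaps [DecidableEq α] (g : Equiv.Perm α) (L : List (Equiv.Perm α))
    (h : ∀ t ∈ L, t.IsSwap) :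
    ∃ L' : List (Equiv.Perm α), (∀ t ∈ L', t.IsSwap) ∧ L'.length = L.length ∧
      L'.prod = g⁻¹ * L.prod * g := by
  induction L with
  | nil => exact ⟨[], by simp, by simp, by simp⟩
  | cons t L ih =>
    obtain ⟨L', hs, hlen, hprod⟩ := ih (fun u hu => h u (List.mem_cons_of_mem _ hu))
    obtain ⟨a, b, hab, rfl⟩ := h t List.mem_cons_self
    refine ⟨(g⁻¹ * Equiv.swap a b * g) :: L', ?_, by simp [hlen], ?_⟩
    · intro u hu
      rcases List.mem_cons.mp hu with rfl | hu
      · refine ⟨g⁻¹ a, g⁻¹ b, fun hh => hab (g⁻¹.injective hh), ?_⟩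
        rw [Equiv.swap_apply_apply, inv_inv]
      · exact hs u hu
    · rw [List.prod_cons, List.prod_cons, hprod]
      group

end IncAux

open IncAux
open Fin.NatCast Fin.CommRing

/-- a multiset of cycles (each of length ≥ 2, minimal in the
sense `∑ (|σ_i| − 1) = n − 1`) can be ordered so that the product equals the
`n`-cycle `(1 2 … n)` (realized as `finRotate n`) only if every cycle in it is
increasing. -/
theorem orderable_implies_increasing (n : ℕ)
    (s : Multiset (Equiv.Perm (Fin n)))
    (hcyc : ∀ σ ∈ s, σ.IsCycle ∧ 2 ≤ σ.support.card)
    (hmin : (s.map fun σ => σ.support.card - 1).sum = n - 1)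
    (hord : ∃ l : List (Equiv.Perm (Fin n)),
      (l : Multiset (Equiv.Perm (Fin n))) = s ∧ l.prod = finRotate n) :
    ∀ σ ∈ s, IsIncreasingCycle σ := by
  classical
  intro σ hσs
  have hk2 : 2 ≤ σ.support.card := (hcyc σ hσs).2
  have hkn : σ.support.card ≤ n := by simpa using Finset.card_le_univ σ.support
  obtain ⟨m, rfl⟩ : ∃ m, n = m + 1 := ⟨n - 1, by omega⟩
  set S := σ.support with hS
  set k := S.card with hk
  obtain ⟨l, hls, hlp⟩ := hord
  have hσl : σ ∈ l := by rw [← hls] at hσs; exact Multiset.mem_coe.mp hσs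
  obtain ⟨l1, l2, rfl⟩ := List.append_of_mem hσl
  have hne1 : ∀ τ : Equiv.Perm (Fin (m+1)), τ ∈ l1 ++ σ :: l2 → τ ≠ 1 := by
    intro τ hτ h1
    have hmem : τ ∈ s := by rw [← hls]; exact Multiset.mem_coe.mpr hτ
    have h2 := (hcyc τ hmem).2
    rw [h1] at h2
    simp at h2
  have hsum : ((l1.map fun σ => σ.support.card - 1).sum + ((k - 1)
      + (l2.map fun σ => σ.support.card - 1).sum)) = m := by
    have h := hmin
    rw [← hls, Multiset.map_coe, Multiset.sum_coe, List.map_append, List.sum_append,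
      List.map_cons, List.sum_cons] at h
    simpa using h
  set A := l1.prod with hA
  set B := l2.prod with hB
  have hc : A * (σ * B) = finRotate (m+1) := by
    rw [← hlp, List.prod_append, List.prod_cons]
  -- swap decompositions
  have hlist : ∀ l' : List (Equiv.Perm (Fin (m+1))), (∀ τ ∈ l', τ ≠ 1) →
      ∃ L : List (Equiv.Perm (Fin (m+1))), (∀ t ∈ L, t.IsSwap) ∧
        L.length ≤ (l'.map fun σ => σ.support.card - 1).sum ∧ L.prod = l'.prod := by
    intro l'
    induction l' with
    | nil => exact fun _ => ⟨[], by simp, by simp, by simp⟩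
    | cons τ l' ih =>
      intro h
      obtain ⟨L1, hs1, hl1, hp1⟩ :=
        exists_swap_list τ.support.card τ le_rfl (h τ List.mem_cons_self)
      obtain ⟨L2, hs2, hl2, hp2⟩ := ih (fun u hu => h u (List.mem_cons_of_mem _ hu))
      refine ⟨L1 ++ L2, ?_, ?_, ?_⟩
      · intro t ht
        rcases List.mem_append.mp ht with ht | ht
        exacts [hs1 t ht, hs2 t ht]
      · rw [List.length_append, List.map_cons, List.sum_cons]
        omega
      · rw [List.prod_append, hp1, hp2, List.prod_cons]
  obtain ⟨LA, hsA, hlA, hpA⟩ := hlist l1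
    (fun τ hτ => hne1 τ (List.mem_append_left _ hτ))
  obtain ⟨LB, hsB, hlB, hpB⟩ := hlist l2
    (fun τ hτ => hne1 τ (List.mem_append_right _ (List.mem_cons_of_mem _ hτ)))
  obtain ⟨LA', hsA', hlA', hpA'⟩ := conj_swaps σ LA hsA
  set τp : Equiv.Perm (Fin (m+1)) := σ⁻¹ * finRotate (m+1) with hτp
  have hτprod : (LA' ++ LB).prod = τp := by
    rw [List.prod_append, hpA', hpA, hpB, hτp, ← hc]
    group
    rfl
  have horb : k ≤ orbits τp := by
    have h1 := le_orbits_prod (LA' ++ LB) (by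
      intro t ht
      rcases List.mem_append.mp ht with ht | ht
      exacts [hsA' t ht, hsB t ht])
    rw [hτprod] at h1
    have h2 : Nat.card (Fin (m+1)) = m + 1 := by simp
    have h3 : (LA' ++ LB).length ≤ m + 1 - k := by
      rw [List.length_append]
      omega
    omega
  -- basic facts about τp
  have hτap : ∀ x : Fin (m+1), τp x = σ⁻¹ (x + 1) := by
    intro x
    rw [hτp, Equiv.Perm.mul_apply, finRotate_succ_apply]
  have hfix : ∀ x : Fin (m+1), x ∉ S → σ⁻¹ x = x := by
    intro x hx
    have h : x ∉ σ⁻¹.support := by rwa [Equiv.Perm.support_inv]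
    exact Equiv.Perm.notMem_support.mp h
  have hmemS : ∀ x ∈ S, σ⁻¹ x ∈ S := by
    intro x hx
    have h : σ (σ⁻¹ x) ∈ S := by rwa [← Equiv.Perm.mul_apply, mul_inv_cancel, Equiv.Perm.one_apply]
    exact (Equiv.Perm.apply_mem_support).mp h
  have hval : ∀ (x : Fin (m+1)) (d : ℕ),
      (x + (d : Fin (m+1))).val = (x.val + d) % (m+1) := by
    intro x d
    rw [Fin.add_def, Fin.val_natCast]
    conv_rhs => rw [Nat.add_mod]
    rw [Nat.mod_eq_of_lt x.isLt]
  have hcast : ∀ d : ℕ, ((d+1 : ℕ) : Fin (m+1)) = (d : Fin (m+1)) + 1 := by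
    intro d
    push_cast
    ring
  have hwalk : ∀ (x : Fin (m+1)) (d : ℕ),
      (∀ j : ℕ, 1 ≤ j → j ≤ d → x + (j : Fin (m+1)) ∉ S) →
      (τp ^ d) x = x + (d : Fin (m+1)) := by
    intro x d
    induction d with
    | zero => intro _; simp
    | succ d ih =>
      intro h
      rw [pow_succ', Equiv.Perm.mul_apply,
        ih (fun j h1 h2 => h j h1 (h2.trans (Nat.le_succ d))), hτap, hcast, ← add_assoc]
      have hnot : x + (d : Fin (m+1)) + 1 ∉ S := by
        have hh := h (d+1) (by omega) le_rfl
        rwa [hcast, ← add_assoc] at hh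
      exact hfix _ hnot
  have hstep1 : ∀ (x : Fin (m+1)) (d : ℕ),
      (∀ j : ℕ, 1 ≤ j → j ≤ d → x + (j : Fin (m+1)) ∉ S) →
      (τp ^ (d+1)) x = σ⁻¹ (x + ((d+1 : ℕ) : Fin (m+1))) := by
    intro x d h
    rw [pow_succ', Equiv.Perm.mul_apply, hwalk x d h, hτap, hcast, ← add_assoc]
  have hreach : ∀ x : Fin (m+1), ∃ t ∈ S, τp.SameCycle x t := by
    intro x
    by_contra hcon
    push_neg at hcon
    have hstep : ∀ d : ℕ, (τp ^ d) x = x + (d : Fin (m+1)) ∧ x + (d : Fin (m+1)) ∉ S := by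
      intro d
      induction d with
      | zero =>
        refine ⟨by simp, by simpa using fun h => hcon x h (Equiv.Perm.SameCycle.refl _ _)⟩
      | succ d ih =>
        obtain ⟨h1, h2⟩ := ih
        have h3 : (τp ^ (d+1)) x = σ⁻¹ (x + ((d+1 : ℕ) : Fin (m+1))) := by
          rw [pow_succ', Equiv.Perm.mul_apply, h1, hτap, hcast, ← add_assoc]
        by_cases h4 : x + ((d+1 : ℕ) : Fin (m+1)) ∈ S
        · exact absurd (⟨((d+1 : ℕ) : ℤ), by rw [zpow_natCast, h3]⟩ : τp.SameCycle x _)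
            (hcon _ (hmemS _ h4))
        · exact ⟨by rw [h3, hfix _ h4], h4⟩
    obtain ⟨s0, hs0⟩ : S.Nonempty := Finset.card_pos.mp (by omega)
    refine (hstep (s0.val + ((m+1) - x.val))).2 ?_
    have hx : x + ((s0.val + ((m+1) - x.val) : ℕ) : Fin (m+1)) = s0 := by
      apply Fin.ext
      rw [hval]
      have h1 := x.isLt
      have h2 := s0.isLt
      have h3 : x.val + (s0.val + ((m+1) - x.val)) = s0.val + (m+1) := by omega
      rw [h3, Nat.add_mod_right, Nat.mod_eq_of_lt h2]
    rw [hx]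
    exact hs0
  haveI : Fintype (Quotient (sc τp)) := Fintype.ofFinite (Quotient (sc τp))
  set q : Fin (m+1) → Quotient (sc τp) := fun x => Quotient.mk (sc τp) x with hq
  have himg : S.image q = Finset.univ := by
    apply Finset.eq_univ_iff_forall.mpr
    intro y
    obtain ⟨x, rfl⟩ := Quotient.exists_rep y
    obtain ⟨t, ht, hxt⟩ := hreach x
    exact Finset.mem_image.mpr ⟨t, ht, Quotient.sound hxt.symm⟩
  have hcard : (S.image q).card = S.card := by
    have h1 : orbits τp = (Finset.univ : Finset (Quotient (sc τp))).card := by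
      rw [Finset.card_univ, ← Nat.card_eq_fintype_card]
      rfl
    have h2 : S.card ≤ (S.image q).card := by
      rw [himg]
      omega
    exact le_antisymm Finset.card_image_le h2
  have hinjS : ∀ x ∈ S, ∀ y ∈ S, τp.SameCycle x y → x = y := by
    intro x hx y hy hxy
    exact Finset.injOn_of_card_image_eq hcard (Finset.mem_coe.mpr hx) (Finset.mem_coe.mpr hy)
      (Quotient.sound hxy)
  have hKEY : ∀ x ∈ S, ∀ t ∈ S, ∀ d : ℕ, 1 ≤ d →
      (∀ j : ℕ, 1 ≤ j → j < d → x + (j : Fin (m+1)) ∉ S) →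
      x + (d : Fin (m+1)) = t → σ x = t := by
    intro x hx t ht d hd hgap hxd
    obtain ⟨d', rfl⟩ : ∃ d', d = d' + 1 := ⟨d - 1, by omega⟩
    have h2 : τp.SameCycle x (σ⁻¹ t) := by
      refine ⟨((d'+1 : ℕ) : ℤ), ?_⟩
      rw [zpow_natCast, hstep1 x d' (fun j hj1 hj2 => hgap j hj1 (by omega)), hxd]
    have h3 : σ⁻¹ t = x := hinjS _ (hmemS t ht) _ hx h2.symm
    rw [← h3, ← Equiv.Perm.mul_apply, mul_inv_cancel, Equiv.Perm.one_apply]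
  -- endgame
  set Ls : List (Fin (m+1)) := S.sort (· ≤ ·) with hLs
  have hsorted : Ls.Pairwise (· < ·) := (Finset.sortedLT_sort S).pairwise
  have hnodup : Ls.Nodup := Finset.sort_nodup S _
  have hlen : Ls.length = k := Finset.length_sort _
  have hmemL : ∀ x : Fin (m+1), x ∈ Ls ↔ x ∈ S := fun x => Finset.mem_sort _
  have hmono : ∀ (i j : ℕ) (hi : i < Ls.length) (hj : j < Ls.length), i < j →
      (Ls[i]).val < (Ls[j]).val := by
    intro i j hi hj hij
    exact Fin.lt_def.mp (List.pairwise_iff_getElem.mp hsorted i j hi hj hij)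
  refine ⟨Ls, hsorted, Equiv.ext fun x => ?_⟩
  by_cases hx : x ∈ S
  · obtain ⟨i, hi, rfl⟩ := List.mem_iff_getElem.mp ((hmemL x).mpr hx)
    rw [List.formPerm_apply_getElem Ls hnodup i hi]
    have hsS : Ls[i] ∈ S := (hmemL _).mp (List.getElem_mem _)
    by_cases hlast : i + 1 < Ls.length
    · have hmod : (i+1) % Ls.length = i + 1 := Nat.mod_eq_of_lt hlast
      simp only [hmod]
      have htS : Ls[i+1] ∈ S := (hmemL _).mp (List.getElem_mem _)
      have hlt : (Ls[i]).val < (Ls[i+1]).val := hmono i (i+1) hi hlast (by omega)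
      have hbm := (Ls[i+1]'hlast).isLt
      refine hKEY _ hsS _ htS ((Ls[i+1]).val - (Ls[i]).val) (by omega) ?_ ?_
      · intro j hj1 hj2 hmem
        obtain ⟨i', hi', hyeq⟩ := List.mem_iff_getElem.mp ((hmemL _).mpr hmem)
        have hyval : (Ls[i] + (j : Fin (m+1))).val = (Ls[i]).val + j := by
          rw [hval, Nat.mod_eq_of_lt (by omega)]
        have hival : (Ls[i']).val = (Ls[i]).val + j := by rw [hyeq, hyval]
        rcases lt_trichotomy i' i with h | h | h
        · have := hmono i' i hi' hi h
          omega
        · subst h; omega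
        · have := hmono i (i+1) hi hlast (by omega)
          rcases Nat.lt_or_ge i' (i+1) with h' | h'
          · omega
          · rcases Nat.eq_or_lt_of_le h' with h' | h'
            · subst h'; omega
            · have := hmono (i+1) i' hlast hi' h'
              omega
      · apply Fin.ext
        rw [hval, Nat.mod_eq_of_lt (by omega)]
        omega
    · have hieq : i + 1 = Ls.length := by omega
      have hmod : (i+1) % Ls.length = 0 := by rw [hieq, Nat.mod_self]
      simp only [hmod]
      have h0 : 0 < Ls.length := by omega
      have htS : Ls[0] ∈ S := (hmemL _).mp (List.getElem_mem _)
      have hipos : 0 < i := by omega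
      have hlt : (Ls[0]).val < (Ls[i]).val := hmono 0 i h0 hi hipos
      have ham := (Ls[i]).isLt
      have hlow : ∀ (i' : ℕ) (hi' : i' < Ls.length), (Ls[0]).val ≤ (Ls[i']).val := by
        intro i' hi'
        rcases Nat.eq_zero_or_pos i' with h | h
        · subst h; exact le_rfl
        · exact (hmono 0 i' h0 hi' h).le
      have hhigh : ∀ (i' : ℕ) (hi' : i' < Ls.length), (Ls[i']).val ≤ (Ls[i]).val := by
        intro i' hi'
        rcases Nat.lt_or_ge i' i with h | h
        · exact (hmono i' i hi' hi h).le
        · have : i' = i := by omega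
          subst this; exact le_rfl
      refine hKEY _ hsS _ htS ((m+1) - (Ls[i]).val + (Ls[0]).val) (by omega) ?_ ?_
      · intro j hj1 hj2 hmem
        obtain ⟨i', hi', hyeq⟩ := List.mem_iff_getElem.mp ((hmemL _).mpr hmem)
        have hi'low := hlow i' hi'
        have hi'high := hhigh i' hi'
        rcases Nat.lt_or_ge ((Ls[i]).val + j) (m+1) with hcase | hcase
        · have hyval : (Ls[i] + (j : Fin (m+1))).val = (Ls[i]).val + j := by
            rw [hval, Nat.mod_eq_of_lt hcase]
          rw [← hyeq] at hyval
          omega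
        · have hyval : (Ls[i] + (j : Fin (m+1))).val = (Ls[i]).val + j - (m+1) := by
            rw [hval, Nat.mod_eq_sub_mod hcase, Nat.mod_eq_of_lt (by omega)]
          rw [← hyeq] at hyval
          omega
      · apply Fin.ext
        rw [hval]
        have h3 : (Ls[i]).val + ((m+1) - (Ls[i]).val + (Ls[0]).val) = (Ls[0]).val + (m+1) := by
          omega
        rw [h3, Nat.add_mod_right, Nat.mod_eq_of_lt (Ls[0]).isLt]
  · rw [Equiv.Perm.notMem_support.mp hx,
      List.formPerm_apply_of_notMem (fun h => hx ((hmemL x).mp h))]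
end
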